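/- For every σ, τ ∈ S_p, Q^(p) (V_σ V'_τ) Q^(p−1) = 0 and Q^(p−1) (V_σ V'_τ) Q^(p) = 0. Consequently the two ideals M̃^(p) := span_ℂ{(V_σ V'_τ) Q^(p) (V_π V'_ρ)} and M̃^(p−1) := span_ℂ{(V_σ V'_τ) Q^(p−1) (V_π V'_ρ)} of A^d_{p,p} satisfy M̃^(p) · M̃^(p−1) = 0. -/

import Mathlib

open Matrix Kronecker

namespace WBA

/-- Configurations of `p` qudits of local dimension `d`. -/
abbrev Conf (d p : ℕ) := Fin p → Fin d

/-- Operators on `H = (ℂ^d)^{⊗ 2p}`, indexed by pairs (unprimed configuration, primed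
configuration). -/
abbrev Op (d p : ℕ) := Matrix (Conf d p × Conf d p) (Conf d p × Conf d p) ℂ

/-- The projector `P⁺_{a,c'}` onto the maximally entangled state between unprimed system `a`
and primed system `c`, tensored with the identity elsewhere. -/
noncomputable def Pplus (d p : ℕ) (a c : Fin p) : Op d p :=
  Matrix.of fun xy uv =>
    if xy.1 a = xy.2 c ∧ uv.1 a = uv.2 c ∧ (∀ j, j ≠ a → xy.1 j = uv.1 j) ∧
        (∀ j, j ≠ c → xy.2 j = uv.2 j) then
      (d : ℂ)⁻¹
    else 0

/-- `d • P⁺_{a,c'}`, i.e. the partially transposed swap `V^{t_{c'}}_{(a,c')}`. -/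
noncomputable def arc (d p : ℕ) (a c : Fin p) : Op d p := (d : ℂ) • Pplus d p a c

/-- `V^(k) = ∏_{j=p-k+1}^{p} (d • P⁺_{j,j'})` (product over the last `k` systems;
`V^(0) = 1`). -/
noncomputable def Vop (d p k : ℕ) : Op d p :=
  (((List.range p).filter (fun j => decide (p - k ≤ j))).map
    (fun j => if h : j < p then arc d p ⟨j, h⟩ ⟨j, h⟩ else 1)).prod

/-- `Q^(p) = d^{-p} V^(p)` and `Q^(k) = d^{-k} V^(k) - d^{-(k+1)} V^(k+1)` for `k < p`. -/
noncomputable def Qop (d p k : ℕ) : Op d p :=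
  if k = p then ((d : ℂ) ^ p)⁻¹ • Vop d p p
  else ((d : ℂ) ^ k)⁻¹ • Vop d p k - ((d : ℂ) ^ (k + 1))⁻¹ • Vop d p (k + 1)

/-- Permutation matrix on `(ℂ^d)^{⊗ n}`: sends `e_v` to `e_{v ∘ σ⁻¹}`. -/
noncomputable def permMat (d n : ℕ) (σ : Equiv.Perm (Fin n)) :
    Matrix (Fin n → Fin d) (Fin n → Fin d) ℂ :=
  Matrix.of fun x u => if x = u ∘ ⇑σ⁻¹ then 1 else 0

/-- `V_σ`: permutation of the unprimed factors, identity on the primed factors. -/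
noncomputable def VL (d p : ℕ) (σ : Equiv.Perm (Fin p)) : Op d p :=
  (permMat d p σ) ⊗ₖ (1 : Matrix (Conf d p) (Conf d p) ℂ)

/-- `V'_τ`: permutation of the primed factors, identity on the unprimed factors. -/
noncomputable def VR (d p : ℕ) (τ : Equiv.Perm (Fin p)) : Op d p :=
  (1 : Matrix (Conf d p) (Conf d p) ℂ) ⊗ₖ (permMat d p τ)

/-- Identification of `H` with `(ℂ^d)^{⊗ (p+p)}`. -/
def glue (d p : ℕ) : (Conf d p × Conf d p) ≃ (Fin (p + p) → Fin d) :=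
  (Equiv.sumArrowEquivProdArrow (Fin p) (Fin p) (Fin d)).symm.trans
    (Equiv.arrowCongr finSumFinEquiv (Equiv.refl (Fin d)))

/-- The permutation operator `W_π`, `π ∈ S_{2p}`, permuting all `2p` tensor factors of `H`. -/
noncomputable def Wfull (d p : ℕ) (π : Equiv.Perm (Fin (p + p))) : Op d p :=
  (permMat d (p + p) π).submatrix (glue d p) (glue d p)

/-- Partial transpose over the `p` primed factors:
`⟨x,y|M^Γ|u,v⟩ = ⟨x,v|M|u,y⟩`. -/
noncomputable def ptrans (d p : ℕ) (M : Op d p) : Op d p :=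
  Matrix.of fun xy uv => M (xy.1, uv.2) (uv.1, xy.2)

/-- The algebra `A^d_{p,p}` of partially transposed permutation operators, as a
linear subspace of `End(H)`. -/
noncomputable def Apt (d p : ℕ) : Submodule ℂ (Op d p) :=
  Submodule.span ℂ {M | ∃ π : Equiv.Perm (Fin (p + p)), M = ptrans d p (Wfull d p π)}

/-- Extension of an operator on systems `1,…,p-r,1',…,(p-r)'` by the identity on the
remaining systems. -/
noncomputable def embed (d p r : ℕ) (M : Op d (p - r)) : Op d p :=
  Matrix.of fun xy uv =>
    M (xy.1 ∘ Fin.castLE (Nat.sub_le p r), xy.2 ∘ Fin.castLE (Nat.sub_le p r))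
      (uv.1 ∘ Fin.castLE (Nat.sub_le p r), uv.2 ∘ Fin.castLE (Nat.sub_le p r)) *
    (if ∀ j : Fin p, p - r ≤ (j : ℕ) → xy.1 j = uv.1 j ∧ xy.2 j = uv.2 j then 1 else 0)

/-- The ideal `M̃^(k) = span{ V_σ V'_τ Q^(k) V_π V'_ρ }` of `A^d_{p,p}`. -/
noncomputable def Mtil (d p k : ℕ) : Submodule ℂ (Op d p) :=
  Submodule.span ℂ {M | ∃ σ τ π ρ : Equiv.Perm (Fin p),
    M = VL d p σ * VR d p τ * Qop d p k * (VL d p π * VR d p ρ)}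

/-- Labels for the two irreps of `S_2`: symmetric `S` and antisymmetric `A`. -/
inductive SA
  | S
  | A
deriving DecidableEq

instance instFintypeSA : Fintype SA := ⟨{SA.S, SA.A}, fun x => by cases x <;> simp⟩

/-- The swap operator on `ℂ^d ⊗ ℂ^d`. -/
noncomputable def Fsw (d : ℕ) : Matrix (Conf d 2) (Conf d 2) ℂ :=
  Matrix.of fun x u => if x 0 = u 1 ∧ x 1 = u 0 then 1 else 0

/-- Symmetric and antisymmetric projectors on `ℂ^d ⊗ ℂ^d`. -/
noncomputable def Esm (d : ℕ) : SA → Matrix (Conf d 2) (Conf d 2) ℂ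
  | SA.S => (2 : ℂ)⁻¹ • (1 + Fsw d)
  | SA.A => (2 : ℂ)⁻¹ • (1 - Fsw d)

/-- `E_i ⊗ E_j` on `H = (ℂ^d)^{⊗4}`. -/
noncomputable def EE (d : ℕ) (i j : SA) : Op d 2 := (Esm d i) ⊗ₖ (Esm d j)

/-- `E_i ⊗ 1` on `H = (ℂ^d)^{⊗4}`. -/
noncomputable def EId (d : ℕ) (i : SA) : Op d 2 :=
  (Esm d i) ⊗ₖ (1 : Matrix (Conf d 2) (Conf d 2) ℂ)

/-- Multiplicities `m_S = d(d+1)/2`, `m_A = d(d-1)/2` (real valued). -/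
noncomputable def mR (d : ℕ) : SA → ℝ
  | SA.S => (d : ℝ) * ((d : ℝ) + 1) / 2
  | SA.A => (d : ℝ) * ((d : ℝ) - 1) / 2

/-- Multiplicities `m_S = d(d+1)/2`, `m_A = d(d-1)/2` (complex valued). -/
noncomputable def mC (d : ℕ) : SA → ℂ
  | SA.S => (d : ℂ) * ((d : ℂ) + 1) / 2
  | SA.A => (d : ℂ) * ((d : ℂ) - 1) / 2

/-- `V^(1) = d • P⁺_{2,2'}` for `p = 2`. -/
noncomputable def V1 (d : ℕ) : Op d 2 := arc d 2 1 1

/-- `V^(2) = d² • P⁺_{2,2'} P⁺_{1,1'}` for `p = 2`. -/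
noncomputable def V2 (d : ℕ) : Op d 2 := arc d 2 1 1 * arc d 2 0 0

/-- `Q^(2) = d^{-2} V^(2)` for `p = 2`. -/
noncomputable def Q2 (d : ℕ) : Op d 2 := ((d : ℂ) ^ 2)⁻¹ • V2 d

/-- `Q^(1) = d^{-1} V^(1) - d^{-2} V^(2)` for `p = 2`. -/
noncomputable def Q1 (d : ℕ) : Op d 2 :=
  (d : ℂ)⁻¹ • V1 d - ((d : ℂ) ^ 2)⁻¹ • V2 d

/-- `G^(2)_{kl} = (d²/√(m_k m_l)) (E_k ⊗ 1) Q^(2) (E_l ⊗ 1)`. -/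
noncomputable def G2 (d : ℕ) (k l : SA) : Op d 2 :=
  ((d : ℂ) ^ 2 / ((Real.sqrt (mR d k * mR d l) : ℝ) : ℂ)) • (EId d k * Q2 d * EId d l)

/-- `G^(2) = G^(2)_{SS} + G^(2)_{AA}`. -/
noncomputable def G2sum (d : ℕ) : Op d 2 := G2 d SA.S SA.S + G2 d SA.A SA.A

/-- The Gram coefficients `b_{SS} = (d+2)/(4d)`, `b_{SA} = b_{AS} = 1/4`,
`b_{AA} = (d-2)/(4d)`. -/
noncomputable def bc (d : ℕ) : SA → SA → ℂ
  | SA.S, SA.S => ((d : ℂ) + 2) / (4 * (d : ℂ))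
  | SA.S, SA.A => 1 / 4
  | SA.A, SA.S => 1 / 4
  | SA.A, SA.A => ((d : ℂ) - 2) / (4 * (d : ℂ))

/-- `Ĝ^(1)_{[ij][kl]} = (E_i ⊗ E_j) Q^(1) (E_k ⊗ E_l)`. -/
noncomputable def Ghat1 (d : ℕ) (i j k l : SA) : Op d 2 :=
  EE d i j * Q1 d * EE d k l

/-- `G^(1)_{[ij][kl]} = b_{ij}⁻¹ Ĝ^(1)_{[ij][kl]}`. -/
noncomputable def G1 (d : ℕ) (i j k l : SA) : Op d 2 := (bc d i j)⁻¹ • Ghat1 d i j k l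

/-- `G^(1) = Σ_{ij} G^(1)_{[ij][ij]}`. -/
noncomputable def G1sum (d : ℕ) : Op d 2 := ∑ i : SA, ∑ j : SA, G1 d i j i j

/-- `G^(0)_{ij} = E_i⊗E_j - b_{ij}⁻¹ (E_i⊗E_j)Q^(1)(E_i⊗E_j)
- δ_{ij} (d²/m_i) (E_i⊗1)Q^(2)(E_i⊗1)`. -/
noncomputable def G0 (d : ℕ) (i j : SA) : Op d 2 :=
  EE d i j - (bc d i j)⁻¹ • (EE d i j * Q1 d * EE d i j) -
    (if i = j then (d : ℂ) ^ 2 / mC d i else 0) • (EId d i * Q2 d * EId d i)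

section Aux

variable {d p : ℕ}

private lemma ite_mul_ite (P Q : Prop) [Decidable P] [Decidable Q] :
    (if P then (1:ℂ) else 0) * (if Q then (1:ℂ) else 0) = if P ∧ Q then 1 else 0 := by
  split_ifs with h1 h2 h3 <;> simp_all

/-- Collapse a sum over functions that agree with `x` off `a`. -/
private lemma sum_update_aux (x : Conf d p) (a : Fin p) (H : Conf d p → ℂ) :
    ∑ z : Conf d p, (if ∀ j, j ≠ a → x j = z j then H z else 0)
      = ∑ t : Fin d, H (Function.update x a t) := by
  have key : ∀ z : Conf d p, (if ∀ j, j ≠ a → x j = z j then H z else 0)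
      = ∑ t : Fin d, (if z = Function.update x a t then H z else 0) := by
    intro z
    by_cases hz : ∀ j, j ≠ a → x j = z j
    · rw [if_pos hz, Finset.sum_eq_single (z a)]
      · rw [if_pos]
        funext j
        by_cases hj : j = a
        · subst hj; simp
        · simp [Function.update_of_ne hj, (hz j hj).symm]
      · intro t _ ht
        rw [if_neg]
        intro hzt
        exact ht (by rw [hzt, Function.update_self])
      · simp
    · rw [if_neg hz, Finset.sum_eq_zero]
      intro t _
      rw [if_neg]
      intro hzt
      exact hz fun j hj => by rw [hzt, Function.update_of_ne hj]
  simp_rw [key]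
  rw [Finset.sum_comm]
  apply Finset.sum_congr rfl
  intro t _
  have := Finset.sum_ite_eq' (Finset.univ : Finset (Conf d p)) (Function.update x a t) H
  simpa using this

/-- The matrix of the product of arcs over a set of sites given by a list. -/
noncomputable def VLm (d p : ℕ) (l : List ℕ) : Op d p :=
  Matrix.of fun xy uv =>
    if (∀ j : Fin p, (j:ℕ) ∈ l → (xy.1 j = xy.2 j ∧ uv.1 j = uv.2 j)) ∧
       (∀ j : Fin p, (j:ℕ) ∉ l → (xy.1 j = uv.1 j ∧ xy.2 j = uv.2 j)) then 1 else 0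

private lemma VLm_nil : VLm d p [] = 1 := by
  ext ⟨x, y⟩ ⟨u, v⟩
  rw [VLm, Matrix.of_apply, Matrix.one_apply]
  apply if_congr _ rfl rfl
  simp [Prod.ext_iff, funext_iff, forall_and]

end Aux


section Aux2

variable {d p : ℕ}

private lemma arc_apply (hd0 : (d:ℂ) ≠ 0) (a : Fin p) (x y z w : Conf d p) :
    arc d p a a (x, y) (z, w)
      = if (x a = y a ∧ z a = w a ∧ (∀ j, j ≠ a → x j = z j) ∧ (∀ j, j ≠ a → y j = w j))
        then 1 else 0 := by
  simp only [arc, Pplus, Matrix.smul_apply, Matrix.of_apply, smul_eq_mul, mul_ite,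
    mul_inv_cancel₀ hd0, mul_zero]

private lemma arc_mul_VLm (hd0 : (d:ℂ) ≠ 0) (a : Fin p) (l : List ℕ) (ha : (a:ℕ) ∉ l) :
    arc d p a a * VLm d p l = VLm d p ((a:ℕ) :: l) := by
  ext ⟨x, y⟩ ⟨u, v⟩
  rw [Matrix.mul_apply, Fintype.sum_prod_type]
  have step1 : ∀ z w : Conf d p,
      arc d p a a (x, y) (z, w) * VLm d p l ((z, w)) ((u, v))
      = if w = Function.update y a (z a) then
          (if x a = y a ∧ (∀ j, j ≠ a → x j = z j) then VLm d p l ((z, w)) ((u, v)) else 0)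
        else 0 := by
    intro z w
    rw [arc_apply hd0]
    by_cases hc : x a = y a ∧ z a = w a ∧ (∀ j, j ≠ a → x j = z j) ∧ (∀ j, j ≠ a → y j = w j)
    · rw [if_pos hc, one_mul, if_pos, if_pos ⟨hc.1, hc.2.2.1⟩]
      funext j
      by_cases hj : j = a
      · subst hj; rw [Function.update_self]; exact hc.2.1.symm
      · rw [Function.update_of_ne hj]; exact (hc.2.2.2 j hj).symm
    · rw [if_neg hc, zero_mul]
      by_cases hw : w = Function.update y a (z a)
      · rw [if_pos hw, if_neg]
        rintro ⟨h1, h3⟩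
        exact hc ⟨h1, by rw [hw, Function.update_self], h3,
          fun j hj => by rw [hw, Function.update_of_ne hj]⟩
      · rw [if_neg hw]
  simp_rw [step1]
  have step2 : ∀ z : Conf d p, ∑ w : Conf d p,
      (if w = Function.update y a (z a) then
        (if x a = y a ∧ (∀ j, j ≠ a → x j = z j) then VLm d p l ((z, w)) ((u, v)) else 0)
       else 0)
      = if x a = y a ∧ (∀ j, j ≠ a → x j = z j) then
          VLm d p l ((z, Function.update y a (z a))) ((u, v)) else 0 := by
    intro z
    simpa using Finset.sum_ite_eq' Finset.univ (Function.update y a (z a))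
      (fun w => if x a = y a ∧ (∀ j, j ≠ a → x j = z j) then
        VLm d p l ((z, w)) ((u, v)) else 0)
  simp_rw [step2, ite_and]
  by_cases hxy : x a = y a
  · simp_rw [if_pos hxy]
    rw [sum_update_aux x a (fun z => VLm d p l ((z, Function.update y a (z a))) ((u, v)))]
    have hupd : ∀ t : Fin d, Function.update y a (Function.update x a t a) = Function.update y a t := by
      intro t; rw [Function.update_self]
    simp_rw [hupd]
    rw [Finset.sum_eq_single (u a)]
    · rw [VLm, VLm, Matrix.of_apply, Matrix.of_apply]
      apply if_congr _ rfl rfl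
      dsimp only
      constructor
      · rintro ⟨h1, h2⟩
        refine ⟨?_, ?_⟩
        · intro j hj
          rcases List.mem_cons.mp hj with hj' | hj'
          · have hja : j = a := Fin.val_injective hj'
            have h2a := (h2 a ha).2
            rw [Function.update_self] at h2a
            rw [hja]
            exact ⟨hxy, h2a⟩
          · have hja : j ≠ a := fun h => ha (h ▸ hj')
            have h1j := h1 j hj'
            rwa [Function.update_of_ne hja, Function.update_of_ne hja] at h1j
        · intro j hj
          have hja : j ≠ a := fun h => hj (h ▸ List.mem_cons_self)
          have hjl : (j:ℕ) ∉ l := fun h => hj (List.mem_cons_of_mem _ h)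
          have h2j := h2 j hjl
          rwa [Function.update_of_ne hja, Function.update_of_ne hja] at h2j
      · rintro ⟨h1, h2⟩
        refine ⟨?_, ?_⟩
        · intro j hj
          have hja : j ≠ a := fun h => ha (h ▸ hj)
          rw [Function.update_of_ne hja, Function.update_of_ne hja]
          exact h1 j (List.mem_cons_of_mem _ hj)
        · intro j hjl
          by_cases hja : j = a
          · rw [hja, Function.update_self, Function.update_self]
            exact ⟨rfl, (h1 a (List.mem_cons_self)).2⟩
          · rw [Function.update_of_ne hja, Function.update_of_ne hja]
            refine h2 j ?_
            intro h
            rcases List.mem_cons.mp h with h' | h'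
            · exact hja (Fin.val_injective h')
            · exact hjl h'
    · intro t _ ht
      rw [VLm, Matrix.of_apply, if_neg]
      rintro ⟨-, h2⟩
      have h2a := (h2 a ha).1
      dsimp only at h2a
      rw [Function.update_self] at h2a
      exact ht h2a
    · simp
  · simp_rw [if_neg hxy]
    rw [Finset.sum_const, smul_zero]
    rw [VLm, Matrix.of_apply, if_neg]
    rintro ⟨h1, -⟩
    exact hxy (h1 a (List.mem_cons_self)).1

end Aux2


section Aux3

variable {d p : ℕ}

private lemma prod_map_arc (hd0 : (d:ℂ) ≠ 0) (l : List ℕ) (hl : l.Nodup)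
    (hlt : ∀ j ∈ l, j < p) :
    ((l.map (fun j => if h : j < p then arc d p ⟨j, h⟩ ⟨j, h⟩ else 1)).prod : Op d p)
      = VLm d p l := by
  induction l with
  | nil => simpa using VLm_nil.symm
  | cons a l ih =>
    rw [List.map_cons, List.prod_cons]
    have hap : a < p := hlt a (List.mem_cons_self)
    rw [dif_pos hap, ih (List.nodup_cons.mp hl).2 (fun j hj => hlt j (List.mem_cons_of_mem _ hj))]
    exact arc_mul_VLm hd0 ⟨a, hap⟩ l (List.nodup_cons.mp hl).1

private lemma Vop_eq_VLm (hd0 : (d:ℂ) ≠ 0) (k : ℕ) :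
    Vop d p k = VLm d p ((List.range p).filter (fun j => decide (p - k ≤ j))) := by
  rw [Vop]
  exact prod_map_arc hd0 _ (List.nodup_range.filter _)
    (fun j hj => List.mem_range.mp (List.mem_of_mem_filter hj))

private lemma mem_filter_range (k : ℕ) (j : Fin p) :
    ((j:ℕ) ∈ (List.range p).filter (fun j => decide (p - k ≤ j))) ↔ p - k ≤ (j:ℕ) := by
  simp [List.mem_filter, List.mem_range, j.isLt]

/-- Entries of `V^(p)`. -/
private lemma Vop_top_apply (hd0 : (d:ℂ) ≠ 0) (x y u v : Conf d p) :
    Vop d p p (x, y) (u, v) = if x = y ∧ u = v then 1 else 0 := by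
  rw [Vop_eq_VLm hd0, VLm, Matrix.of_apply]
  apply if_congr _ rfl rfl
  dsimp only
  simp only [mem_filter_range]
  constructor
  · rintro ⟨h1, -⟩
    exact ⟨funext fun j => (h1 j (by omega)).1, funext fun j => (h1 j (by omega)).2⟩
  · rintro ⟨rfl, rfl⟩
    exact ⟨fun j _ => ⟨rfl, rfl⟩, fun j hj => (hj (by omega)).elim⟩

/-- Entries of `V^(p-1)` (`p ≥ 1`), with `o` the first site. -/
private lemma Vop_sub_apply (hd0 : (d:ℂ) ≠ 0) (h0 : 0 < p) (x y u v : Conf d p) :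
    Vop d p (p - 1) (x, y) (u, v)
      = if ((∀ j, j ≠ (⟨0, h0⟩ : Fin p) → (x j = y j ∧ u j = v j)) ∧
            x ⟨0, h0⟩ = u ⟨0, h0⟩ ∧ y ⟨0, h0⟩ = v ⟨0, h0⟩) then 1 else 0 := by
  have hpk : p - (p - 1) = 1 := by omega
  rw [Vop_eq_VLm hd0, VLm, Matrix.of_apply]
  apply if_congr _ rfl rfl
  dsimp only
  simp only [mem_filter_range]
  have hne : ∀ j : Fin p, (p - (p - 1) ≤ (j:ℕ)) ↔ j ≠ (⟨0, h0⟩ : Fin p) := by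
    intro j
    rw [Fin.ne_iff_vne]
    simp only [Fin.val_mk]
    omega
  constructor
  · rintro ⟨h1, h2⟩
    refine ⟨fun j hj => h1 j ((hne j).mpr hj), ?_⟩
    refine h2 ⟨0, h0⟩ ?_
    simp only [Fin.val_mk]
    omega
  · rintro ⟨h1, h2⟩
    refine ⟨fun j hj => h1 j ((hne j).mp hj), ?_⟩
    intro j hj
    have : j = (⟨0, h0⟩ : Fin p) := by
      rw [Fin.ext_iff]
      simp only [Fin.val_mk]
      omega
    rw [this]
    exact h2

/-- Multiplication of permutation matrices. -/
private lemma permMat_mul (n : ℕ) (σ τ : Equiv.Perm (Fin n)) :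
    (permMat d n σ : Matrix (Fin n → Fin d) (Fin n → Fin d) ℂ) * permMat d n τ
      = permMat d n (σ * τ) := by
  ext x u
  rw [Matrix.mul_apply, Finset.sum_eq_single (u ∘ ⇑τ⁻¹)]
  · simp only [permMat, Matrix.of_apply]
    simp only [if_true, mul_one]
    have hcomp : u ∘ ⇑(σ * τ)⁻¹ = (u ∘ ⇑τ⁻¹) ∘ ⇑σ⁻¹ := by
      rw [_root_.mul_inv_rev, Equiv.Perm.coe_mul]
      rfl
    rw [hcomp]
  · intro b _ hb
    simp only [permMat, Matrix.of_apply]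
    rw [if_neg hb, mul_zero]
  · simp

private lemma VL_mul_VR (σ τ : Equiv.Perm (Fin p)) :
    VL d p σ * VR d p τ = (permMat d p σ) ⊗ₖ (permMat d p τ) := by
  rw [VL, VR, ← Matrix.mul_kronecker_mul, mul_one, one_mul]

private lemma VLVR_mul_VLVR (σ τ σ' τ' : Equiv.Perm (Fin p)) :
    (VL d p σ * VR d p τ) * (VL d p σ' * VR d p τ')
      = VL d p (σ * σ') * VR d p (τ * τ') := by
  rw [VL_mul_VR, VL_mul_VR, VL_mul_VR, ← Matrix.mul_kronecker_mul, permMat_mul, permMat_mul]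

private lemma X_apply (σ τ : Equiv.Perm (Fin p)) (x y u v : Conf d p) :
    (VL d p σ * VR d p τ) (x, y) (u, v)
      = if x = u ∘ ⇑σ⁻¹ ∧ y = v ∘ ⇑τ⁻¹ then 1 else 0 := by
  rw [VL_mul_VR, Matrix.kronecker_apply, permMat, permMat, Matrix.of_apply, Matrix.of_apply,
    ite_mul_ite]

end Aux3


section Aux4

variable {d p : ℕ}

/-- If `z` is constant along `ρ` away from `o`, it is also constant at `o`. -/
private lemma key_zero (ρ : Equiv.Perm (Fin p)) (o : Fin p) (z : Conf d p)
    (hz : ∀ j, j ≠ o → z j = z (ρ j)) : z (ρ o) = z o := by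
  classical
  set c := z (ρ o) with hc
  set g : Fin p → ℕ := fun j => if z j = c then 1 else 0 with hg
  have hsum : ∑ j, g (ρ j) = ∑ j, g j := Equiv.sum_comp ρ g
  have h1 : ∑ j, g (ρ j) = g (ρ o) + ∑ j ∈ Finset.univ.erase o, g (ρ j) :=
    (Finset.add_sum_erase _ _ (Finset.mem_univ o)).symm
  have h2 : ∑ j, g j = g o + ∑ j ∈ Finset.univ.erase o, g j :=
    (Finset.add_sum_erase _ _ (Finset.mem_univ o)).symm
  have h3 : ∑ j ∈ Finset.univ.erase o, g (ρ j) = ∑ j ∈ Finset.univ.erase o, g j := by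
    apply Finset.sum_congr rfl
    intro j hj
    rw [hg]
    dsimp only
    rw [(hz j (Finset.ne_of_mem_erase hj)).symm]
  have h4 : g (ρ o) = g o := by
    have := hsum
    rw [h1, h2, h3] at this
    omega
  have h5 : g (ρ o) = 1 := by rw [hg]; simp [hc]
  have h6 : g o = 1 := by rw [← h4, h5]
  by_contra hne
  have : g o = 0 := by
    rw [hg]
    simp only [hg]
    rw [if_neg (fun h => hne h.symm)]
  omega

/-- The key counting identity. -/
private lemma key_count (ρ : Equiv.Perm (Fin p)) (o : Fin p) (u0 v0 : Fin d) :
    (d : ℂ) * (∑ z : Conf d p,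
        if z o = u0 ∧ z (ρ o) = v0 ∧ (∀ j, j ≠ o → z j = z (ρ j)) then (1:ℂ) else 0)
      = if u0 = v0 then (∑ z : Conf d p, if (∀ j, z j = z (ρ j)) then (1:ℂ) else 0) else 0 := by
  classical
  by_cases huv : u0 = v0
  · subst huv
    rw [if_pos rfl]
    have hcond : ∀ z : Conf d p,
        (z o = u0 ∧ z (ρ o) = u0 ∧ (∀ j, j ≠ o → z j = z (ρ j)))
          ↔ (z o = u0 ∧ (∀ j, z j = z (ρ j))) := by
      intro z
      constructor
      · rintro ⟨h1, h2, h3⟩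
        refine ⟨h1, fun j => ?_⟩
        by_cases hj : j = o
        · rw [hj, h1, h2]
        · exact h3 j hj
      · rintro ⟨h1, h2⟩
        exact ⟨h1, by rw [← h2 o, h1], fun j _ => h2 j⟩
    simp_rw [hcond]
    -- RHS: split according to the value at o
    have hsplit : (∑ z : Conf d p, if (∀ j, z j = z (ρ j)) then (1:ℂ) else 0)
        = ∑ t : Fin d, ∑ z : Conf d p, if z o = t ∧ (∀ j, z j = z (ρ j)) then (1:ℂ) else 0 := by
      rw [Finset.sum_comm]
      apply Finset.sum_congr rfl
      intro z _
      by_cases hz : ∀ j, z j = z (ρ j)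
      · rw [if_pos hz]
        rw [Finset.sum_eq_single (z o)]
        · rw [if_pos ⟨rfl, hz⟩]
        · intro t _ ht
          rw [if_neg (fun h => ht h.1.symm)]
        · simp
      · rw [if_neg hz, Finset.sum_eq_zero]
        intro t _
        rw [if_neg (fun h => hz h.2)]
    rw [hsplit]
    have hconst : ∀ t : Fin d,
        (∑ z : Conf d p, if z o = t ∧ (∀ j, z j = z (ρ j)) then (1:ℂ) else 0)
          = ∑ z : Conf d p, if z o = u0 ∧ (∀ j, z j = z (ρ j)) then (1:ℂ) else 0 := by
      intro t
      have := Equiv.sum_comp (Equiv.arrowCongr (Equiv.refl (Fin p)) (Equiv.swap u0 t))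
        (fun z : Conf d p => if z o = t ∧ (∀ j, z j = z (ρ j)) then (1:ℂ) else 0)
      rw [← this]
      apply Finset.sum_congr rfl
      intro z _
      apply if_congr _ rfl rfl
      simp only [Equiv.arrowCongr_apply, Equiv.refl_symm, Equiv.coe_refl, Function.comp_apply,
        Function.comp_id, id_eq]
      constructor
      · rintro ⟨h1, h2⟩
        refine ⟨?_, fun j => (Equiv.swap u0 t).injective (h2 j)⟩
        have := h1
        rwa [Equiv.swap_apply_eq_iff, Equiv.swap_apply_right] at this
      · rintro ⟨h1, h2⟩
        refine ⟨by rw [h1, Equiv.swap_apply_left], fun j => by rw [h2 j]⟩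
    rw [Finset.sum_congr rfl (fun t _ => hconst t), Finset.sum_const, Finset.card_univ,
      Fintype.card_fin, nsmul_eq_mul]
  · rw [if_neg huv, Finset.sum_eq_zero, mul_zero]
    intro z _
    rw [if_neg]
    rintro ⟨h1, h2, h3⟩
    exact huv (by rw [← h1, ← h2, key_zero ρ o z h3])

end Aux4


section Aux5

variable {d p : ℕ}

private lemma comp_iff (σ τ : Equiv.Perm (Fin p)) (z w : Conf d p) :
    z ∘ ⇑σ⁻¹ = w ∘ ⇑τ⁻¹ ↔ w = z ∘ ⇑(σ⁻¹ * τ) := by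
  constructor
  · intro h
    funext i
    have := congrFun h (τ i)
    simp only [Function.comp_apply, Equiv.Perm.inv_def, Equiv.symm_apply_apply] at this
    simp only [Function.comp_apply, Equiv.Perm.mul_apply]
    exact this.symm
  · rintro rfl
    funext i
    simp [Equiv.Perm.mul_apply]

private lemma VpX_apply (hd0 : (d:ℂ) ≠ 0) (σ τ : Equiv.Perm (Fin p)) (x y u v : Conf d p) :
    (Vop d p p * (VL d p σ * VR d p τ)) (x, y) (u, v)
      = if x = y ∧ u ∘ ⇑σ⁻¹ = v ∘ ⇑τ⁻¹ then 1 else 0 := by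
  rw [Matrix.mul_apply, Finset.sum_eq_single ((u ∘ ⇑σ⁻¹, v ∘ ⇑τ⁻¹) : Conf d p × Conf d p)]
  · rw [X_apply, if_pos ⟨rfl, rfl⟩, mul_one, Vop_top_apply hd0]
  · rintro ⟨z, w⟩ _ hb
    rw [X_apply, if_neg, mul_zero]
    rintro ⟨rfl, rfl⟩
    exact hb rfl
  · simp

private lemma middle_identity (hd0 : (d:ℂ) ≠ 0) (h0 : 0 < p) (σ τ : Equiv.Perm (Fin p)) :
    Vop d p p * (VL d p σ * VR d p τ) * Vop d p p
      = (d : ℂ) • (Vop d p p * (VL d p σ * VR d p τ) * Vop d p (p - 1)) := by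
  set o : Fin p := ⟨0, h0⟩ with ho_def
  set ρ : Equiv.Perm (Fin p) := σ⁻¹ * τ with hρ_def
  ext ⟨x, y⟩ ⟨u, v⟩
  rw [Matrix.smul_apply, Matrix.mul_apply, Matrix.mul_apply, Fintype.sum_prod_type,
    Fintype.sum_prod_type]
  simp only [VpX_apply hd0, Vop_top_apply hd0, Vop_sub_apply hd0 h0, smul_eq_mul]
  by_cases hxy : x = y
  · simp only [hxy, true_and]
    -- collapse the inner sums over `w`
    have hL : ∀ z : Conf d p,
        (∑ w : Conf d p, (if z ∘ ⇑σ⁻¹ = w ∘ ⇑τ⁻¹ then (1:ℂ) else 0) *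
          (if z = w ∧ u = v then 1 else 0))
        = if z = z ∘ ⇑ρ ∧ u = v then 1 else 0 := by
      intro z
      have hterm : ∀ w : Conf d p,
          (if z ∘ ⇑σ⁻¹ = w ∘ ⇑τ⁻¹ then (1:ℂ) else 0) * (if z = w ∧ u = v then 1 else 0)
          = if w = z ∘ ⇑ρ then (if z = w ∧ u = v then (1:ℂ) else 0) else 0 := by
        intro w
        rw [ite_mul_ite]
        by_cases hw : w = z ∘ ⇑ρ
        · rw [if_pos hw]
          exact if_congr (and_iff_right ((comp_iff σ τ z w).mpr hw)) rfl rfl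
        · rw [if_neg hw, if_neg]
          rintro ⟨h1, -⟩
          exact hw ((comp_iff σ τ z w).mp h1)
      simp_rw [hterm]
      simpa using Finset.sum_ite_eq' Finset.univ (z ∘ ⇑ρ)
        (fun w => if z = w ∧ u = v then (1:ℂ) else 0)
    have hR : ∀ z : Conf d p,
        (∑ w : Conf d p, (if z ∘ ⇑σ⁻¹ = w ∘ ⇑τ⁻¹ then (1:ℂ) else 0) *
          (if (∀ j, j ≠ o → (z j = w j ∧ u j = v j)) ∧ z o = u o ∧ w o = v o then 1 else 0))
        = if (∀ j, j ≠ o → (z j = z (ρ j) ∧ u j = v j)) ∧ z o = u o ∧ z (ρ o) = v o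
            then 1 else 0 := by
      intro z
      have hterm : ∀ w : Conf d p,
          (if z ∘ ⇑σ⁻¹ = w ∘ ⇑τ⁻¹ then (1:ℂ) else 0) *
            (if (∀ j, j ≠ o → (z j = w j ∧ u j = v j)) ∧ z o = u o ∧ w o = v o then 1 else 0)
          = if w = z ∘ ⇑ρ then
              (if (∀ j, j ≠ o → (z j = w j ∧ u j = v j)) ∧ z o = u o ∧ w o = v o
                then (1:ℂ) else 0) else 0 := by
        intro w
        rw [ite_mul_ite]
        by_cases hw : w = z ∘ ⇑ρ
        · rw [if_pos hw]
          exact if_congr (and_iff_right ((comp_iff σ τ z w).mpr hw)) rfl rfl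
        · rw [if_neg hw, if_neg]
          rintro ⟨h1, -⟩
          exact hw ((comp_iff σ τ z w).mp h1)
      simp_rw [hterm]
      have := Finset.sum_ite_eq' Finset.univ (z ∘ ⇑ρ)
        (fun w => if (∀ j, j ≠ o → (z j = w j ∧ u j = v j)) ∧ z o = u o ∧ w o = v o
          then (1:ℂ) else 0)
      simpa using this
    simp_rw [← ho_def, hL, hR]
    by_cases huv : ∀ j, j ≠ o → u j = v j
    · have hc2 : ∀ z : Conf d p,
          ((∀ j, j ≠ o → (z j = z (ρ j) ∧ u j = v j)) ∧ z o = u o ∧ z (ρ o) = v o)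
            ↔ (z o = u o ∧ z (ρ o) = v o ∧ (∀ j, j ≠ o → z j = z (ρ j))) := by
        intro z
        constructor
        · rintro ⟨h1, h2, h3⟩
          exact ⟨h2, h3, fun j hj => (h1 j hj).1⟩
        · rintro ⟨h1, h2, h3⟩
          exact ⟨fun j hj => ⟨h3 j hj, huv j hj⟩, h1, h2⟩
      simp_rw [hc2]
      rw [key_count ρ o (u o) (v o)]
      by_cases ho : u o = v o
      · have huvq : u = v := by
          funext j
          by_cases hj : j = o
          · rw [hj]; exact ho
          · exact huv j hj
        rw [if_pos ho]
        apply Finset.sum_congr rfl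
        intro z _
        apply if_congr _ rfl rfl
        rw [and_iff_left huvq, funext_iff]
        simp only [Function.comp_apply]
      · rw [if_neg ho, Finset.sum_eq_zero]
        intro z _
        rw [if_neg]
        rintro ⟨-, h2⟩
        exact ho (by rw [← h2])
    · push_neg at huv
      obtain ⟨j0, hj0, hj0'⟩ := huv
      rw [Finset.sum_eq_zero, Finset.sum_eq_zero, mul_zero]
      · intro z _
        rw [if_neg]
        rintro ⟨h1, -⟩
        exact hj0' ((h1 j0 hj0).2)
      · intro z _
        rw [if_neg]
        rintro ⟨-, h2⟩
        exact hj0' (by rw [h2])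
  · rw [Finset.sum_eq_zero, Finset.sum_eq_zero, mul_zero]
    · intro z _
      rw [Finset.sum_eq_zero]
      intro w _
      rw [if_neg (fun h => hxy h.1), zero_mul]
    · intro z _
      rw [Finset.sum_eq_zero]
      intro w _
      rw [if_neg (fun h => hxy h.1), zero_mul]

end Aux5


section Aux6

variable {d p : ℕ}

private lemma main_orth (hd0 : (d:ℂ) ≠ 0) (hp : 1 ≤ p) (σ τ : Equiv.Perm (Fin p)) :
    Qop d p p * (VL d p σ * VR d p τ) * Qop d p (p - 1) = 0 := by
  have h0 : 0 < p := hp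
  have hne : p - 1 ≠ p := by omega
  have hsub : p - 1 + 1 = p := by omega
  rw [Qop, Qop, if_pos rfl, if_neg hne, hsub]
  rw [smul_mul_assoc, smul_mul_assoc, mul_sub, mul_smul_comm, mul_smul_comm]
  rw [middle_identity hd0 h0 σ τ]
  rw [smul_smul, ← sub_smul]
  have hscal : ((d:ℂ) ^ (p-1))⁻¹ - ((d:ℂ) ^ p)⁻¹ * (d:ℂ) = 0 := by
    rw [show ((d:ℂ) ^ p) = (d:ℂ) ^ (p-1) * (d:ℂ) from by rw [← pow_succ, hsub]]
    field_simp
    ring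
  rw [hscal, zero_smul, smul_zero]

private lemma VLm_transpose (l : List ℕ) : (VLm d p l)ᵀ = VLm d p l := by
  ext ⟨x, y⟩ ⟨u, v⟩
  rw [Matrix.transpose_apply, VLm, Matrix.of_apply, Matrix.of_apply]
  apply if_congr _ rfl rfl
  dsimp only
  constructor
  · rintro ⟨h1, h2⟩
    exact ⟨fun j hj => ⟨(h1 j hj).2, (h1 j hj).1⟩,
      fun j hj => ⟨(h2 j hj).1.symm, (h2 j hj).2.symm⟩⟩
  · rintro ⟨h1, h2⟩
    exact ⟨fun j hj => ⟨(h1 j hj).2, (h1 j hj).1⟩,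
      fun j hj => ⟨(h2 j hj).1.symm, (h2 j hj).2.symm⟩⟩

private lemma Vop_transpose (hd0 : (d:ℂ) ≠ 0) (k : ℕ) : (Vop d p k)ᵀ = Vop d p k := by
  rw [Vop_eq_VLm hd0, VLm_transpose]

private lemma Qop_transpose (hd0 : (d:ℂ) ≠ 0) (k : ℕ) : (Qop d p k)ᵀ = Qop d p k := by
  rw [Qop]
  split_ifs with h
  · rw [Matrix.transpose_smul, Vop_transpose hd0]
  · rw [Matrix.transpose_sub, Matrix.transpose_smul, Matrix.transpose_smul,
      Vop_transpose hd0, Vop_transpose hd0]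

private lemma permMat_transpose (n : ℕ) (σ : Equiv.Perm (Fin n)) :
    (permMat d n σ)ᵀ = permMat d n σ⁻¹ := by
  ext x u
  rw [Matrix.transpose_apply, permMat, permMat, Matrix.of_apply, Matrix.of_apply]
  apply if_congr _ rfl rfl
  rw [inv_inv]
  constructor <;> rintro rfl <;> funext i <;> simp

private lemma VL_transpose (σ : Equiv.Perm (Fin p)) : (VL d p σ)ᵀ = VL d p σ⁻¹ := by
  ext ⟨x, y⟩ ⟨u, v⟩
  rw [Matrix.transpose_apply, VL, VL, Matrix.kronecker_apply, Matrix.kronecker_apply]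
  have h1 : permMat d p σ u x = permMat d p σ⁻¹ x u := by
    rw [← permMat_transpose]; rfl
  have h2 : (1 : Matrix (Conf d p) (Conf d p) ℂ) v y = (1 : Matrix (Conf d p) (Conf d p) ℂ) y v := by
    rw [Matrix.one_apply, Matrix.one_apply]
    exact if_congr eq_comm rfl rfl
  rw [h1, h2]

private lemma VR_transpose (τ : Equiv.Perm (Fin p)) : (VR d p τ)ᵀ = VR d p τ⁻¹ := by
  ext ⟨x, y⟩ ⟨u, v⟩
  rw [Matrix.transpose_apply, VR, VR, Matrix.kronecker_apply, Matrix.kronecker_apply]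
  have h1 : permMat d p τ v y = permMat d p τ⁻¹ y v := by
    rw [← permMat_transpose]; rfl
  have h2 : (1 : Matrix (Conf d p) (Conf d p) ℂ) u x = (1 : Matrix (Conf d p) (Conf d p) ℂ) x u := by
    rw [Matrix.one_apply, Matrix.one_apply]
    exact if_congr eq_comm rfl rfl
  rw [h1, h2]

private lemma VR_mul_VL (σ τ : Equiv.Perm (Fin p)) :
    VR d p τ * VL d p σ = VL d p σ * VR d p τ := by
  rw [VR, VL, ← Matrix.mul_kronecker_mul, ← Matrix.mul_kronecker_mul, one_mul, mul_one,
    one_mul, mul_one]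

private lemma main_orth' (hd0 : (d:ℂ) ≠ 0) (hp : 1 ≤ p) (σ τ : Equiv.Perm (Fin p)) :
    Qop d p (p - 1) * (VL d p σ * VR d p τ) * Qop d p p = 0 := by
  have h := main_orth hd0 hp σ⁻¹ τ⁻¹
  have h2 := congrArg Matrix.transpose h
  simp only [Matrix.transpose_mul, Matrix.transpose_zero, Qop_transpose hd0,
    VL_transpose, VR_transpose, inv_inv] at h2
  rw [VR_mul_VL, ← mul_assoc] at h2
  exact h2

end Aux6


section Aux7

variable {d p : ℕ}

private lemma gen_mul_gen (hd0 : (d:ℂ) ≠ 0) (hp : 1 ≤ p)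
    (σ τ π ρ σ' τ' π' ρ' : Equiv.Perm (Fin p)) :
    (VL d p σ * VR d p τ * Qop d p p * (VL d p π * VR d p ρ)) *
      (VL d p σ' * VR d p τ' * Qop d p (p - 1) * (VL d p π' * VR d p ρ')) = 0 := by
  have hmid : (VL d p π * VR d p ρ) * (VL d p σ' * VR d p τ')
      = VL d p (π * σ') * VR d p (ρ * τ') := VLVR_mul_VLVR π ρ σ' τ'
  have horth := main_orth hd0 hp (π * σ') (ρ * τ')
  calc (VL d p σ * VR d p τ * Qop d p p * (VL d p π * VR d p ρ)) *
      (VL d p σ' * VR d p τ' * Qop d p (p - 1) * (VL d p π' * VR d p ρ'))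
      = (VL d p σ * VR d p τ) *
        ((Qop d p p * ((VL d p π * VR d p ρ) * (VL d p σ' * VR d p τ')) * Qop d p (p - 1)) *
          (VL d p π' * VR d p ρ')) := by
        simp only [mul_assoc]
    _ = (VL d p σ * VR d p τ) *
        ((Qop d p p * (VL d p (π * σ') * VR d p (ρ * τ')) * Qop d p (p - 1)) *
          (VL d p π' * VR d p ρ')) := by rw [hmid]
    _ = 0 := by rw [horth, zero_mul, mul_zero]

end Aux7

/-- `Q^(p) (V_σ V'_τ) Q^(p-1) = 0 = Q^(p-1) (V_σ V'_τ) Q^(p)`, and consequently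
the ideals `M̃^(p)` and `M̃^(p-1)` satisfy `M̃^(p) · M̃^(p-1) = 0`. -/
theorem ideals_orthogonal (d p : ℕ) (hd : 2 ≤ d) (hp : 1 ≤ p) :
    (∀ σ τ : Equiv.Perm (Fin p),
      Qop d p p * (VL d p σ * VR d p τ) * Qop d p (p - 1) = 0 ∧
      Qop d p (p - 1) * (VL d p σ * VR d p τ) * Qop d p p = 0) ∧
    (∀ x ∈ Mtil d p p, ∀ y ∈ Mtil d p (p - 1), x * y = 0) := by
  have hd0 : (d : ℂ) ≠ 0 := by
    simp only [ne_eq, Nat.cast_eq_zero]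
    omega
  constructor
  · intro σ τ
    exact ⟨main_orth hd0 hp σ τ, main_orth' hd0 hp σ τ⟩
  · intro x hx y hy
    induction hx using Submodule.span_induction with
    | mem x hxm =>
      induction hy using Submodule.span_induction with
      | mem y hym =>
        obtain ⟨σ, τ, π, ρ, rfl⟩ := hxm
        obtain ⟨σ', τ', π', ρ', rfl⟩ := hym
        exact gen_mul_gen hd0 hp σ τ π ρ σ' τ' π' ρ'
      | zero => rw [mul_zero]
      | add y₁ y₂ hy₁ hy₂ ih₁ ih₂ => rw [mul_add, ih₁, ih₂, add_zero]
      | smul a y₁ hy₁ ih => rw [mul_smul_comm, ih, smul_zero]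
    | zero => rw [zero_mul]
    | add x₁ x₂ hx₁ hx₂ ih₁ ih₂ => rw [add_mul, ih₁, ih₂, add_zero]
    | smul a x₁ hx₁ ih => rw [smul_mul_assoc, ih, smul_zero]

end WBA
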